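/- Let X : ℝ² → ℝ² be the vector field X(x, y) = (−x + xy, −y) and L : ℝ² → ℝ the function L(x, y) = ln(1 + x²) + y². Then: (i) L(0, 0) = 0 and L(x, y) > 0 for all (x, y) ≠ (0, 0); (ii) L is proper, i.e., L(x, y) → +∞ as ‖(x, y)‖ → +∞; and (iii) the derivative of L along X satisfies ∇L(x, y) · X(x, y) = 2x²(−1 + y)/(1 + x²) − 2y² < 0 for all (x, y) ≠ (0, 0). -/

import Mathlib

open Real Filter

theorem stmt_18 (X : ℝ × ℝ → ℝ × ℝ) (L : ℝ × ℝ → ℝ)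
    (hX : ∀ p : ℝ × ℝ, X p = (-p.1 + p.1 * p.2, -p.2))
    (hL : ∀ p : ℝ × ℝ, L p = Real.log (1 + p.1 ^ 2) + p.2 ^ 2) :
    L (0, 0) = 0 ∧ (∀ p : ℝ × ℝ, p ≠ (0, 0) → 0 < L p) ∧
      Filter.Tendsto L (Filter.comap norm Filter.atTop) Filter.atTop ∧
      (∀ p : ℝ × ℝ, p ≠ (0, 0) →
        fderiv ℝ L p (X p) = 2 * p.1 ^ 2 * (-1 + p.2) / (1 + p.1 ^ 2) - 2 * p.2 ^ 2 ∧
          fderiv ℝ L p (X p) < 0) := by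
  have hLe : L = fun p : ℝ × ℝ => Real.log (1 + p.1 ^ 2) + p.2 ^ 2 := funext hL
  have hXe : X = fun p : ℝ × ℝ => ((-p.1 + p.1 * p.2 : ℝ), (-p.2 : ℝ)) := funext hX
  subst hLe hXe
  refine ⟨by norm_num, ?_, ?_, ?_⟩
  · intro p hp
    have h1 : (0:ℝ) ≤ Real.log (1 + p.1 ^ 2) := Real.log_nonneg (by nlinarith [sq_nonneg p.1])
    have h2 : (0:ℝ) ≤ p.2 ^ 2 := sq_nonneg _
    rcases (show p.1 ≠ 0 ∨ p.2 ≠ 0 by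
      by_contra h; push_neg at h; exact hp (Prod.ext h.1 h.2)) with h | h
    · have : (0:ℝ) < Real.log (1 + p.1 ^ 2) :=
        Real.log_pos (by nlinarith [sq_nonneg p.1, pow_two_pos_of_ne_zero h])
      positivity
    · 
      have h2' : (0:ℝ) < p.2 ^ 2 := pow_two_pos_of_ne_zero h
      positivity
  · -- properness
    have hbound : ∀ p : ℝ × ℝ, Real.log (1 + ‖p‖ ^ 2) ≤ Real.log (1 + p.1 ^ 2) + p.2 ^ 2 := by
      intro p
      have hn : ‖p‖ = max ‖p.1‖ ‖p.2‖ := rfl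
      rcases le_total ‖p.2‖ ‖p.1‖ with h | h
      · have : ‖p‖ ^ 2 = p.1 ^ 2 := by
          rw [hn, max_eq_left h, Real.norm_eq_abs, sq_abs]
        rw [this]
        nlinarith [sq_nonneg p.2]
      · have hsq : ‖p‖ ^ 2 = p.2 ^ 2 := by
          rw [hn, max_eq_right h, Real.norm_eq_abs, sq_abs]
        rw [hsq]
        have hlog : Real.log (1 + p.2 ^ 2) ≤ p.2 ^ 2 := by
          have := Real.log_le_sub_one_of_pos (show (0:ℝ) < 1 + p.2 ^ 2 by positivity)
          linarith
        have h1 : (0:ℝ) ≤ Real.log (1 + p.1 ^ 2) := Real.log_nonneg (by nlinarith [sq_nonneg p.1])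
        linarith
    have hnorm : Tendsto (fun p : ℝ × ℝ => ‖p‖) (comap norm atTop) atTop := tendsto_comap
    have hsq : Tendsto (fun p : ℝ × ℝ => ‖p‖ ^ 2) (comap norm atTop) atTop :=
      (tendsto_pow_atTop two_ne_zero).comp hnorm
    have hadd : Tendsto (fun p : ℝ × ℝ => 1 + ‖p‖ ^ 2) (comap norm atTop) atTop :=
      tendsto_atTop_add_const_left _ 1 hsq
    have hlog : Tendsto (fun p : ℝ × ℝ => Real.log (1 + ‖p‖ ^ 2)) (comap norm atTop) atTop :=
      Real.tendsto_log_atTop.comp hadd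
    exact tendsto_atTop_mono hbound hlog
  · intro p hp
    set x := p.1
    set y := p.2
    have hx2 : (0:ℝ) < 1 + x ^ 2 := by positivity
    have hd1 : HasDerivAt (fun t : ℝ => Real.log (1 + t ^ 2)) (2 * x / (1 + x ^ 2)) x := by
      have h : HasDerivAt (fun t : ℝ => 1 + t ^ 2) (2 * x) x := by
        simpa using ((hasDerivAt_pow 2 x).const_add 1)
      simpa using h.log (ne_of_gt hx2)
    have hd2 : HasDerivAt (fun t : ℝ => t ^ 2) (2 * y) y := by
      simpa using hasDerivAt_pow 2 y
    have hf1 : HasFDerivAt (fun p : ℝ × ℝ => Real.log (1 + p.1 ^ 2))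
        ((2 * x / (1 + x ^ 2)) • ContinuousLinearMap.fst ℝ ℝ ℝ) p :=
      hd1.comp_hasFDerivAt (f := Prod.fst) p (hasFDerivAt_fst)
    have hf2 : HasFDerivAt (fun p : ℝ × ℝ => p.2 ^ 2)
        ((2 * y) • ContinuousLinearMap.snd ℝ ℝ ℝ) p :=
      hd2.comp_hasFDerivAt (f := Prod.snd) p (hasFDerivAt_snd)
    have hF : HasFDerivAt (fun p : ℝ × ℝ => Real.log (1 + p.1 ^ 2) + p.2 ^ 2)
        ((2 * x / (1 + x ^ 2)) • ContinuousLinearMap.fst ℝ ℝ ℝ +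
          (2 * y) • ContinuousLinearMap.snd ℝ ℝ ℝ) p := hf1.add hf2
    have heq : fderiv ℝ (fun p : ℝ × ℝ => Real.log (1 + p.1 ^ 2) + p.2 ^ 2) p
        ((-x + x * y, -y)) = 2 * x ^ 2 * (-1 + y) / (1 + x ^ 2) - 2 * y ^ 2 := by
      rw [hF.fderiv]
      simp [ContinuousLinearMap.add_apply, ContinuousLinearMap.smul_apply]
      field_simp
      ring
    refine ⟨heq, heq ▸ ?_⟩
    have hne : x ≠ 0 ∨ y ≠ 0 := by
      by_contra h; push_neg at h; exact hp (Prod.ext h.1 h.2)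
    rw [sub_neg, div_lt_iff₀ hx2]
    rcases hne with h | h
    · nlinarith [pow_two_pos_of_ne_zero h, sq_nonneg y, sq_nonneg (y - 1), sq_nonneg (x*y), sq_nonneg (x*(y-1))]
    · nlinarith [pow_two_pos_of_ne_zero h, sq_nonneg x, sq_nonneg (y - 1), sq_nonneg (x*y), sq_nonneg (x*(y-1))]
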